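/- Let 0 ≤ m ≤ n be an integer, b_0,…,b_n real distinct mod π, a real, and ϑ an integer with m−n ≤ ϑ ≤ n−m and ϑ ≡ m+n (mod 2). Then sin(mz−a)/∏_{k=0}^n sin(z−b_k) = Σ_{k=0}^n sin(m b_k − a) cos(ϑ(z−b_k)) / [ ∏_{j≠k} sin(b_k−b_j) · sin(z−b_k) ] for all z avoiding the poles. -/

import Mathlib

open Finset

namespace SinCosExpansionAux

open Complex Polynomial

lemma expI_sub (u v : ℂ) : Complex.exp ((u - v) * I) = Complex.exp (u*I) / Complex.exp (v*I) := by
  rw [← Complex.exp_sub]; congr 1; ring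

lemma sin_sub_eq' (u v : ℂ) :
    Complex.sin (u - v) = (Complex.exp (u*I)^2 - Complex.exp (v*I)^2) /
      (2 * I * (Complex.exp (u*I) * Complex.exp (v*I))) := by
  have hu := Complex.exp_ne_zero (u*I)
  have hv := Complex.exp_ne_zero (v*I)
  have h2 : Complex.exp (-(u-v) * I) = Complex.exp (v*I) / Complex.exp (u*I) := by
    rw [← Complex.exp_sub]; congr 1; ring
  unfold Complex.sin
  rw [h2, expI_sub]
  generalize Complex.exp (u*I) = X at *
  generalize Complex.exp (v*I) = Y at *
  field_simp
  linear_combination (Y^2 - X^2) * Complex.I_sq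

lemma sin_mul_sub (m : ℕ) (w a : ℂ) :
    Complex.sin ((m:ℂ)*w - a) = ((Complex.exp (w*I)^2)^m - Complex.exp (a*I)^2) /
      (2*I*(Complex.exp (w*I)^m * Complex.exp (a*I))) := by
  rw [sin_sub_eq' ((m:ℂ)*w) a, show ((m:ℂ)*w)*I = (m:ℂ)*(w*I) by ring, Complex.exp_nat_mul]
  ring

lemma cos_int_eq (ϑ : ℤ) (s t : ℕ) (hts : (t:ℤ) - s = ϑ) (u v : ℂ) :
    Complex.cos ((ϑ:ℂ) * (u - v)) =
      ((Complex.exp (u*I)^2)^t * (Complex.exp (v*I)^2)^s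
        + (Complex.exp (v*I)^2)^t * (Complex.exp (u*I)^2)^s) /
        (2 * Complex.exp (u*I)^(s+t) * Complex.exp (v*I)^(s+t)) := by
  subst hts
  have hu := Complex.exp_ne_zero (u*I)
  have hv := Complex.exp_ne_zero (v*I)
  have hW : Complex.exp ((((t:ℤ) - s : ℤ) : ℂ) * (u - v) * I)
      = (Complex.exp (u*I) / Complex.exp (v*I)) ^ ((t:ℤ) - s) := by
    rw [← expI_sub, ← Complex.exp_int_mul]; congr 1; ring
  unfold Complex.cos
  rw [show -((((t:ℤ) - s : ℤ) : ℂ) * (u - v)) * I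
      = -(((((t:ℤ) - s : ℤ) : ℂ) * (u - v)) * I) by ring, Complex.exp_neg, hW]
  rw [zpow_sub₀ (div_ne_zero hu hv), zpow_natCast, zpow_natCast]
  rw [div_pow, div_pow]
  field_simp
  ring

lemma lagrange_eval_div {n : ℕ} (c : Fin (n+1) → ℂ) (hc : Function.Injective c)
    (P : Polynomial ℂ) (hP : P.degree < ((n+1 : ℕ) : WithBot ℕ)) (x : ℂ) :
    P.eval x = ∑ k, P.eval (c k) * ∏ j ∈ univ.erase k, ((x - c j) / (c k - c j)) := by
  have hcard : (univ : Finset (Fin (n+1))).card = n+1 := by simp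
  have hint := Lagrange.eq_interpolate (s := (univ : Finset (Fin (n+1)))) (f := P) hc.injOn
    (by rw [hcard]; exact_mod_cast hP)
  conv_lhs => rw [hint]
  rw [Lagrange.interpolate_apply, Polynomial.eval_finset_sum]
  refine Finset.sum_congr rfl fun k _ => ?_
  rw [Polynomial.eval_mul, Polynomial.eval_C, Lagrange.basis, Polynomial.eval_prod]
  refine congrArg _ (Finset.prod_congr rfl fun j hj => ?_)
  rw [Lagrange.basisDivisor]
  simp [div_eq_inv_mul]

set_option maxHeartbeats 1600000 in
lemma main_aux (m s t : ℕ) (q α : ℂ) (e : Fin (m+s+t+1) → ℂ)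
    (hq : q ≠ 0) (hα : α ≠ 0) (he : ∀ k, e k ≠ 0)
    (hce : ∀ j k, j ≠ k → (e j)^2 - (e k)^2 ≠ 0)
    (hxc : ∀ k, q^2 - (e k)^2 ≠ 0) :
    ((q^2)^m - α^2) / (2*I*(q^m * α)) / ∏ k, ((q^2 - (e k)^2) / (2*I*(q * e k)))
      = ∑ k, (((e k)^2)^m - α^2) / (2*I*((e k)^m * α)) *
          (((q^2)^t * ((e k)^2)^s + ((e k)^2)^t * (q^2)^s) / (2 * q^(s+t) * (e k)^(s+t))) /
        ((∏ j ∈ univ.erase k, (((e k)^2 - (e j)^2) / (2*I*(e k * e j)))) *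
          ((q^2 - (e k)^2) / (2*I*(q * e k)))) := by
  have h2 : (2:ℂ) ≠ 0 := two_ne_zero
  have hI := Complex.I_ne_zero
  have hprodxc : ∏ k, (q^2 - (e k)^2) ≠ 0 := Finset.prod_ne_zero_iff.mpr fun k _ => hxc k
  have hprode : ∏ k, e k ≠ 0 := Finset.prod_ne_zero_iff.mpr fun k _ => he k
  have hprodeE : ∀ k : Fin (m+s+t+1), ∏ j ∈ univ.erase k, e j ≠ 0 :=
    fun k => Finset.prod_ne_zero_iff.mpr fun j _ => he j
  have hprodcc : ∀ k : Fin (m+s+t+1), ∏ j ∈ univ.erase k, ((e k)^2 - (e j)^2) ≠ 0 :=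
    fun k => Finset.prod_ne_zero_iff.mpr fun j hj =>
      hce k j (Ne.symm (Finset.mem_erase.mp hj).1)
  have hprodsin : ∏ k, ((q^2 - (e k)^2) / (2*I*(q * e k)))
      = (∏ k, (q^2 - (e k)^2)) / ((2*I*q)^(m+s+t+1) * ∏ k, e k) := by
    rw [Finset.prod_div_distrib]
    congr 1
    calc ∏ k : Fin (m+s+t+1), (2*I*(q * e k))
        = ∏ k : Fin (m+s+t+1), ((2*I*q) * e k) :=
          Finset.prod_congr rfl fun k _ => by ring
      _ = (2*I*q)^(m+s+t+1) * ∏ k, e k := by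
          rw [Finset.prod_mul_distrib, Finset.prod_const, Finset.card_univ, Fintype.card_fin]
  have hprodsinE : ∀ k : Fin (m+s+t+1),
      ∏ j ∈ univ.erase k, (((e k)^2 - (e j)^2) / (2*I*(e k * e j)))
      = (∏ j ∈ univ.erase k, ((e k)^2 - (e j)^2)) /
          ((2*I*(e k))^(m+s+t) * ∏ j ∈ univ.erase k, e j) := by
    intro k
    rw [Finset.prod_div_distrib]
    congr 1
    calc ∏ j ∈ univ.erase k, (2*I*(e k * e j))
        = ∏ j ∈ univ.erase k, ((2*I*(e k)) * e j) :=
          Finset.prod_congr rfl fun j _ => by ring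
      _ = (2*I*(e k))^(m+s+t) * ∏ j ∈ univ.erase k, e j := by
          rw [Finset.prod_mul_distrib, Finset.prod_const,
            Finset.card_erase_of_mem (Finset.mem_univ k), Finset.card_univ, Fintype.card_fin,
            Nat.add_sub_cancel]
  set P : Polynomial ℂ := (Polynomial.X^m - Polynomial.C (α^2)) *
      (Polynomial.C ((q^2)^t) * Polynomial.X^s + Polynomial.C ((q^2)^s) * Polynomial.X^t)
    with hPdef
  have hPdegle : P.degree ≤ ((m+s+t : ℕ) : WithBot ℕ) := by
    rw [hPdef]
    compute_degree
    simp only [Nat.cast_withBot, ← WithBot.coe_sup, ← WithBot.coe_add, WithBot.coe_le_coe]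
    omega
  have hPdeg : P.degree < ((m+s+t+1 : ℕ) : WithBot ℕ) :=
    lt_of_le_of_lt hPdegle (by exact_mod_cast Nat.lt_succ_self (m+s+t))
  have hcinj : Function.Injective (fun k : Fin (m+s+t+1) => (e k)^2) := by
    intro j k h
    by_contra hne
    exact hce j k hne (sub_eq_zero.mpr h)
  have hlag := lagrange_eval_div (fun k => (e k)^2) hcinj P hPdeg (q^2)
  have hevalx : P.eval (q^2) = 2 * (((q^2)^m - α^2) * (q^2)^(s+t)) := by
    rw [hPdef]; simp; ring
  have hevalc : ∀ x0 : ℂ, P.eval x0 = (x0^m - α^2) * ((q^2)^t * x0^s + (q^2)^s * x0^t) := by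
    intro x0; rw [hPdef]; simp
  clear_value P
  have core : ((q^2)^m - α^2) * (q^2)^(s+t) / ∏ k, (q^2 - (e k)^2)
      = ∑ k, ((((e k)^2)^m - α^2) * ((q^2)^t * ((e k)^2)^s + (q^2)^s * ((e k)^2)^t)) /
          (2 * (∏ j ∈ univ.erase k, ((e k)^2 - (e j)^2)) * (q^2 - (e k)^2)) := by
    calc ((q^2)^m - α^2) * (q^2)^(s+t) / ∏ k, (q^2 - (e k)^2)
        = P.eval (q^2) / (2 * ∏ k, (q^2 - (e k)^2)) := by
          rw [hevalx, mul_div_mul_left _ _ h2]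
      _ = (∑ k, P.eval ((e k)^2) * ∏ j ∈ univ.erase k,
            ((q^2 - (e j)^2) / ((e k)^2 - (e j)^2))) / (2 * ∏ k, (q^2 - (e k)^2)) := by
          rw [hlag]
      _ = _ := by
          rw [Finset.sum_div]
          refine Finset.sum_congr rfl fun k _ => ?_
          rw [hevalc, Finset.prod_div_distrib,
            ← Finset.mul_prod_erase univ (fun j => q^2 - (e j)^2) (Finset.mem_univ k)]
          have h5 : ∏ j ∈ univ.erase k, (q^2 - (e j)^2) ≠ 0 :=
            Finset.prod_ne_zero_iff.mpr fun j _ => hxc j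
          rw [← mul_div_assoc, div_div, div_eq_div_iff
            (mul_ne_zero (hprodcc k) (mul_ne_zero h2 (mul_ne_zero (hxc k) h5)))
            (mul_ne_zero (mul_ne_zero h2 (hprodcc k)) (hxc k))]
          ring
  have hL : ((q^2)^m - α^2) / (2*I*(q^m * α)) / ∏ k, ((q^2 - (e k)^2) / (2*I*(q * e k)))
      = ((2*I)^(m+s+t) * (∏ k, e k) * q / (α * q^(s+t))) *
        (((q^2)^m - α^2) * (q^2)^(s+t) / ∏ k, (q^2 - (e k)^2)) := by
    rw [hprodsin]
    field_simp [hq, hα, hI, hprodxc, hprode]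
    ring
  have hR : ∀ k : Fin (m+s+t+1),
      (((e k)^2)^m - α^2) / (2*I*((e k)^m * α)) *
          (((q^2)^t * ((e k)^2)^s + ((e k)^2)^t * (q^2)^s) / (2 * q^(s+t) * (e k)^(s+t))) /
        ((∏ j ∈ univ.erase k, (((e k)^2 - (e j)^2) / (2*I*(e k * e j)))) *
          ((q^2 - (e k)^2) / (2*I*(q * e k))))
      = ((2*I)^(m+s+t) * (∏ k, e k) * q / (α * q^(s+t))) *
        (((((e k)^2)^m - α^2) * ((q^2)^t * ((e k)^2)^s + (q^2)^s * ((e k)^2)^t)) /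
          (2 * (∏ j ∈ univ.erase k, ((e k)^2 - (e j)^2)) * (q^2 - (e k)^2))) := by
    intro k
    rw [hprodsinE k, ← Finset.mul_prod_erase univ e (Finset.mem_univ k)]
    obtain ⟨X, hX, hx⟩ : ∃ X, q^2 - (e k)^2 = X ∧ X ≠ 0 := ⟨_, rfl, hxc k⟩
    rw [hX]
    simp only [div_mul_div_comm, div_div_eq_mul_div, div_mul_eq_mul_div, div_div,
      ← mul_div_assoc]
    rw [div_eq_div_iff]
    · ring
    · apply_rules [mul_ne_zero, pow_ne_zero, hq, hα, hI, h2, he, hx, hprodcc, hprodeE]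
    · apply_rules [mul_ne_zero, pow_ne_zero, hq, hα, hI, h2, he, hx, hprodcc, hprodeE]
  rw [hL, core, Finset.mul_sum]
  exact Finset.sum_congr rfl fun k _ => (hR k).symm

end SinCosExpansionAux

open SinCosExpansionAux Complex in
theorem sin_over_sine_cos_expansion (n : ℕ) (b : Fin (n + 1) → ℝ)
    (hb : ∀ j k, j ≠ k → Real.sin (b j - b k) ≠ 0)
    (m : ℕ) (hm : m ≤ n) (a : ℝ) (ϑ : ℤ)
    (hϑl : (m : ℤ) - n ≤ ϑ) (hϑu : ϑ ≤ (n : ℤ) - m)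
    (hpar : ϑ % 2 = ((m : ℤ) + n) % 2)
    (z : ℂ) (hz : ∀ k, Complex.sin (z - (b k : ℂ)) ≠ 0) :
    Complex.sin ((m : ℂ) * z - (a : ℂ)) / ∏ k, Complex.sin (z - (b k : ℂ))
      = ∑ k, Complex.sin ((m : ℂ) * (b k : ℂ) - (a : ℂ)) *
            Complex.cos ((ϑ : ℂ) * (z - (b k : ℂ))) /
          ((∏ j ∈ univ.erase k, Complex.sin ((b k : ℂ) - (b j : ℂ))) *
            Complex.sin (z - (b k : ℂ))) := by
  obtain ⟨s, t, hts, hmn⟩ : ∃ s t : ℕ, (t:ℤ) - s = ϑ ∧ m + s + t = n := by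
    refine ⟨((n:ℤ) - m - ϑ).toNat / 2, ((n:ℤ) - m + ϑ).toNat / 2, ?_, ?_⟩ <;> omega
  subst hmn
  have hce : ∀ j k : Fin (m+s+t+1), j ≠ k →
      (Complex.exp ((b j : ℂ)*I))^2 - (Complex.exp ((b k : ℂ)*I))^2 ≠ 0 := by
    intro j k hjk h
    apply hb j k hjk
    have h2 : Complex.sin ((b j : ℂ) - (b k : ℂ)) = 0 := by
      rw [sin_sub_eq', h, zero_div]
    have h3 : ((Real.sin (b j - b k) : ℝ) : ℂ) = Complex.sin ((b j : ℂ) - (b k : ℂ)) := by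
      rw [Complex.ofReal_sin, Complex.ofReal_sub]
    rw [h2] at h3
    exact_mod_cast h3
  have hxc : ∀ k : Fin (m+s+t+1),
      (Complex.exp (z*I))^2 - (Complex.exp ((b k : ℂ)*I))^2 ≠ 0 := by
    intro k h
    apply hz k
    rw [sin_sub_eq', h, zero_div]
  simp only [sin_mul_sub]
  simp only [cos_int_eq ϑ s t hts]
  simp only [sin_sub_eq']
  exact main_aux m s t (Complex.exp (z*I)) (Complex.exp ((a:ℂ)*I))
    (fun k => Complex.exp ((b k : ℂ)*I)) (Complex.exp_ne_zero _) (Complex.exp_ne_zero _)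
    (fun k => Complex.exp_ne_zero _) hce hxc
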